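/- Let F : (0,∞) → ℝ be convex and continuously differentiable, and suppose the one-sided limit of F(x) as x → 0⁺ exists and is finite. Then there exists x₀ > 0 such that for every x ∈ (0, x₀], F′(x) > −1/x. -/
import Mathlib

/-- If `F : (0,∞) → ℝ` is convex and continuously differentiable (with derivative `F'`),
and `F(x)` has a finite one-sided limit as `x → 0⁺`, then there is `x₀ > 0` such that
`F'(x) > -1/x` for all `x ∈ (0, x₀]`. -/
theorem stmt0 (F F' : ℝ → ℝ)
    (hconv : ConvexOn ℝ (Set.Ioi 0) F)
    (hderiv : ∀ x ∈ Set.Ioi (0:ℝ), HasDerivAt F (F' x) x)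
    (hcont : ContinuousOn F' (Set.Ioi 0))
    (L : ℝ) (hlim : Filter.Tendsto F (nhdsWithin 0 (Set.Ioi 0)) (nhds L)) :
    ∃ x₀ > (0:ℝ), ∀ x ∈ Set.Ioc (0:ℝ) x₀, F' x > -(1/x) := by
  -- choose ε so |F y - L| < 1 on (0, ε)
  have h1 : ∀ᶠ y in nhdsWithin 0 (Set.Ioi 0), |F y - L| < 1 := by
    have := Metric.tendsto_nhds.mp hlim 1 one_pos
    simpa [Real.dist_eq] using this
  rw [Filter.eventually_iff, mem_nhdsWithin] at h1
  obtain ⟨U, hUopen, hU0, hUsub⟩ := h1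
  obtain ⟨ε, hε, hball⟩ := Metric.isOpen_iff.mp hUopen 0 hU0
  refine ⟨ε / 2, by positivity, fun x hx => ?_⟩
  obtain ⟨hx0, hxε⟩ := hx
  have hxU : ∀ y, y ∈ Set.Ioo (0:ℝ) x → |F y - L| < 1 := by
    intro y ⟨hy0, hyx⟩
    apply hUsub
    constructor
    · apply hball
      rw [Metric.mem_ball, Real.dist_eq, sub_zero, abs_of_pos hy0]
      calc y < x := hyx
        _ ≤ ε / 2 := hxε
        _ < ε := by linarith
    · exact hy0
  -- slope bound: (F x - L)/x ≤ F' x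
  have hxmem : x ∈ Set.Ioi (0:ℝ) := hx0
  have hslope : ∀ y ∈ Set.Ioo (0:ℝ) x, slope F y x ≤ F' x := fun y ⟨hy0, hyx⟩ =>
    hconv.slope_le_of_hasDerivAt hy0 hxmem hyx (hderiv x hxmem)
  have htend : Filter.Tendsto (fun y => slope F y x) (nhdsWithin 0 (Set.Ioi 0))
      (nhds ((F x - L) / (x - 0))) := by
    simp only [slope_def_field, div_eq_mul_inv]
    refine Filter.Tendsto.mul (tendsto_const_nhds.sub hlim) (Filter.Tendsto.inv₀ ?_ (by simpa using hx0.ne'))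
    exact (continuous_const.sub continuous_id).continuousAt.tendsto.mono_left nhdsWithin_le_nhds
  have key : (F x - L) / x ≤ F' x := by
    have hle : (F x - L) / (x - 0) ≤ F' x := by
      refine le_of_tendsto htend ?_
      filter_upwards [Ioo_mem_nhdsGT_of_mem ⟨le_refl 0, hx0⟩] with y hy
      exact hslope y hy
    simpa using hle
  have hF : F x - L > -1 := by
    have hxball : |F x - L| < 1 := by
      refine hUsub ⟨hball ?_, hx0⟩
      rw [Metric.mem_ball, Real.dist_eq, sub_zero, abs_of_pos hx0]; linarith
    linarith [(abs_lt.mp hxball).1]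
  calc F' x ≥ (F x - L) / x := key
    _ > -1 / x := by gcongr
    _ = -(1/x) := by ring
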